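/- Let R be an n×m complex matrix with m ≥ n whose rows are unit vectors in the Euclidean norm, D = diag(σ₁,…,σ_n) with σ_i ≥ 0, and B(k) the n×n cyclic column submatrices of R. Then Σ_{k=1}^m ‖D B(k) D‖_* ≥ (1/n)(Σ_k σ_k)². -/

import Mathlib

open Matrix Finset

/-- The nuclear (Schatten-1, trace) norm: the sum of the singular values. -/
noncomputable def nuclearNorm {n m : ℕ} (A : Matrix (Fin n) (Fin m) ℂ) : ℝ :=
  ∑ j, Real.sqrt ((Matrix.isHermitian_conjTranspose_mul_self A).eigenvalues j)

/-- The `n×n` submatrix of an `n×m` matrix `R` formed by `n` cyclically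
consecutive columns starting after column `k` (indices mod `m`). -/
def cycSub {n m : ℕ} (R : Matrix (Fin n) (Fin m) ℂ) (k : Fin m) :
    Matrix (Fin n) (Fin n) ℂ :=
  Matrix.of fun i j => R i ⟨(j.val + k.val) % m, Nat.mod_lt _ k.pos⟩

lemma sqrt_sum_le_sum_sqrt {ι : Type*} (s : Finset ι) (f : ι → ℝ) (h : ∀ i ∈ s, 0 ≤ f i) :
    Real.sqrt (∑ i ∈ s, f i) ≤ ∑ i ∈ s, Real.sqrt (f i) := by
  have h1 : ∑ i ∈ s, f i ≤ (∑ i ∈ s, Real.sqrt (f i)) ^ 2 := by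
    calc ∑ i ∈ s, f i = ∑ i ∈ s, Real.sqrt (f i) ^ 2 := by
          exact Finset.sum_congr rfl fun i hi => (Real.sq_sqrt (h i hi)).symm
      _ ≤ (∑ i ∈ s, Real.sqrt (f i)) ^ 2 :=
          Finset.sum_sq_le_sq_sum_of_nonneg fun i _ => Real.sqrt_nonneg _
  calc Real.sqrt (∑ i ∈ s, f i) ≤ Real.sqrt ((∑ i ∈ s, Real.sqrt (f i)) ^ 2) :=
        Real.sqrt_le_sqrt h1
    _ = ∑ i ∈ s, Real.sqrt (f i) :=
        Real.sqrt_sq (Finset.sum_nonneg fun i _ => Real.sqrt_nonneg _)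

lemma sum_eigs_eq_trace {N : ℕ} {A : Matrix (Fin N) (Fin N) ℂ} (hA : A.IsHermitian) :
    (∑ i, hA.eigenvalues i : ℂ) = A.trace := by
  conv_rhs => rw [hA.spectral_theorem]
  rw [Unitary.conjStarAlgAut_apply, Matrix.trace_mul_cycle]
  rw [show (star (hA.eigenvectorUnitary : Matrix (Fin N) (Fin N) ℂ)) *
      (hA.eigenvectorUnitary : Matrix (Fin N) (Fin N) ℂ) = 1 from
    Matrix.mem_unitaryGroup_iff'.mp hA.eigenvectorUnitary.2]
  rw [one_mul, Matrix.trace_diagonal]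
  rfl

lemma nuclear_ge_l1 {N : ℕ} (M : Matrix (Fin N) (Fin N) ℂ) :
    (1 / (N : ℝ)) * ∑ i, ∑ j, ‖M i j‖ ≤ nuclearNorm M := by
  rcases Nat.eq_zero_or_pos N with h0 | hN
  · subst h0; simp [nuclearNorm]
  set hM := Matrix.isHermitian_conjTranspose_mul_self M with hMdef
  have tr : ∑ i, hM.eigenvalues i = ∑ i, ∑ j, ‖M i j‖ ^ 2 := by
    have h1 : (∑ i, hM.eigenvalues i : ℂ) = (Mᴴ * M).trace := sum_eigs_eq_trace hM
    have h2 : (Mᴴ * M).trace = ((∑ i, ∑ j, ‖M i j‖ ^ 2 : ℝ) : ℂ) := by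
      rw [Matrix.trace]
      push_cast
      rw [Finset.sum_comm]
      refine Finset.sum_congr rfl fun i _ => ?_
      rw [Matrix.diag_apply, Matrix.mul_apply]
      refine Finset.sum_congr rfl fun j _ => ?_
      rw [Matrix.conjTranspose_apply]
      rw [Complex.star_def, ← Complex.normSq_eq_conj_mul_self, ← Complex.sq_norm]
      push_cast
      ring
    have := h1.trans h2
    exact_mod_cast this
  have hev : ∀ j, 0 ≤ hM.eigenvalues j := fun j =>
    Matrix.eigenvalues_conjTranspose_mul_self_nonneg M j
  have step1 : Real.sqrt (∑ i, ∑ j, ‖M i j‖ ^ 2) ≤ nuclearNorm M := by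
    rw [← tr, nuclearNorm]
    exact sqrt_sum_le_sum_sqrt _ _ fun i _ => hev i
  have step2 : (1 / (N : ℝ)) * ∑ i, ∑ j, ‖M i j‖
      ≤ Real.sqrt (∑ i, ∑ j, ‖M i j‖ ^ 2) := by
    have key : (∑ p : Fin N × Fin N, ‖M p.1 p.2‖) ^ 2
        ≤ (∑ _p : Fin N × Fin N, (1:ℝ) ^ 2) * ∑ p : Fin N × Fin N, ‖M p.1 p.2‖ ^ 2 := by
      have := Finset.sum_mul_sq_le_sq_mul_sq Finset.univ (fun _ : Fin N × Fin N => (1:ℝ))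
        (fun p => ‖M p.1 p.2‖)
      simpa using this
    have hcard : (∑ _p : Fin N × Fin N, (1:ℝ) ^ 2) = (N : ℝ) ^ 2 := by
      simp [Finset.card_univ]; ring
    rw [hcard] at key
    have hS : (0:ℝ) ≤ ∑ p : Fin N × Fin N, ‖M p.1 p.2‖ :=
      Finset.sum_nonneg fun p _ => norm_nonneg _
    have hsq : (1 / (N : ℝ)) * ∑ p : Fin N × Fin N, ‖M p.1 p.2‖
        ≤ Real.sqrt (∑ p : Fin N × Fin N, ‖M p.1 p.2‖ ^ 2) := by
      rw [show (1 / (N : ℝ)) * ∑ p : Fin N × Fin N, ‖M p.1 p.2‖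
          = Real.sqrt (((1 / (N : ℝ)) * ∑ p : Fin N × Fin N, ‖M p.1 p.2‖) ^ 2) from
        (Real.sqrt_sq (by positivity)).symm]
      apply Real.sqrt_le_sqrt
      have hNpos : (0:ℝ) < (N : ℝ) := by exact_mod_cast hN
      rw [mul_pow]
      rw [div_pow, one_pow]
      rw [div_mul_eq_mul_div, one_mul, div_le_iff₀ (by positivity)]
      calc (∑ p : Fin N × Fin N, ‖M p.1 p.2‖) ^ 2
          ≤ (N:ℝ)^2 * ∑ p : Fin N × Fin N, ‖M p.1 p.2‖ ^ 2 := key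
        _ = (∑ p : Fin N × Fin N, ‖M p.1 p.2‖ ^ 2) * (N:ℝ)^2 := by ring
    simpa [Fintype.sum_prod_type] using hsq
  exact step2.trans step1

/-- For an `n×m` complex matrix `R` (`m ≥ n`) whose rows are unit
vectors, and `D = diag(σ₁,…,σₙ)` with `σᵢ ≥ 0`,
`Σₖ ‖D B(k) D‖_* ≥ (1/n)(Σₖ σₖ)²`. -/
theorem stmt17 {n m : ℕ} (R : Matrix (Fin n) (Fin m) ℂ) (hnm : n ≤ m)
    (hrows : ∀ i, ∑ j, ‖R i j‖ ^ 2 = 1)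
    (σ : Fin n → ℝ) (hσ : ∀ i, 0 ≤ σ i) :
    (1 / (n : ℝ)) * (∑ i, σ i) ^ 2
      ≤ ∑ k : Fin m,
          nuclearNorm (Matrix.diagonal (fun i => (σ i : ℂ)) * cycSub R k
            * Matrix.diagonal (fun i => (σ i : ℂ))) := by
  rcases Nat.eq_zero_or_pos n with h0 | hn
  · subst h0
    simp [nuclearNorm]
  have hm : 0 < m := lt_of_lt_of_le hn hnm
  haveI : NeZero m := ⟨hm.ne'⟩
  set D := Matrix.diagonal (fun i => (σ i : ℂ)) with hD
  -- entrywise absolute values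
  have hentry : ∀ (k : Fin m) (i j : Fin n),
      ‖(D * cycSub R k * D) i j‖
        = σ i * ‖R i ⟨(j.val + k.val) % m, Nat.mod_lt _ k.pos⟩‖ * σ j := by
    intro k i j
    rw [Matrix.mul_diagonal, hD, Matrix.diagonal_mul]
    rw [norm_mul, norm_mul, Complex.norm_real, Complex.norm_real,
      Real.norm_of_nonneg (hσ i), Real.norm_of_nonneg (hσ j)]
    rfl
  -- rows have ℓ1 norm ≥ 1
  have hL : ∀ i, (1:ℝ) ≤ ∑ t, ‖R i t‖ := by
    intro i
    have h1 : ∑ t, ‖R i t‖ ^ 2 ≤ (∑ t, ‖R i t‖) ^ 2 :=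
      Finset.sum_sq_le_sq_sum_of_nonneg fun t _ => norm_nonneg _
    rw [hrows i] at h1
    nlinarith [Finset.sum_nonneg (fun t (_ : t ∈ Finset.univ) => norm_nonneg (R i t))]
  -- sum over k of each row-entry abs
  have hcyc : ∀ (i : Fin n) (j : Fin n),
      ∑ k : Fin m, ‖R i ⟨(j.val + k.val) % m, Nat.mod_lt _ k.pos⟩‖
        = ∑ t, ‖R i t‖ := by
    intro i j
    have hjm : j.val < m := lt_of_lt_of_le j.isLt hnm
    set c : Fin m := ⟨j.val, hjm⟩ with hc
    calc ∑ k : Fin m, ‖R i ⟨(j.val + k.val) % m, Nat.mod_lt _ k.pos⟩‖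
        = ∑ k : Fin m, ‖R i (c + k)‖ := by
          refine Finset.sum_congr rfl fun k _ => ?_
          have hk : (⟨(j.val + k.val) % m, Nat.mod_lt _ k.pos⟩ : Fin m) = c + k := by
            apply Fin.ext; simp [Fin.add_def, hc]
          rw [hk]
      _ = ∑ t, ‖R i t‖ := Equiv.sum_comp (Equiv.addLeft c) fun t => ‖R i t‖
  -- total entrywise sum
  have hE : (∑ i, σ i) ^ 2 ≤ ∑ k : Fin m, ∑ i, ∑ j, ‖(D * cycSub R k * D) i j‖ := by
    have hEeq : ∑ k : Fin m, ∑ i, ∑ j, ‖(D * cycSub R k * D) i j‖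
        = ∑ i, ∑ j, σ i * (∑ t, ‖R i t‖) * σ j := by
      rw [Finset.sum_comm]
      refine Finset.sum_congr rfl fun i _ => ?_
      rw [Finset.sum_comm]
      refine Finset.sum_congr rfl fun j _ => ?_
      calc ∑ k : Fin m, ‖(D * cycSub R k * D) i j‖
          = ∑ k : Fin m, σ i * ‖R i ⟨(j.val + k.val) % m, Nat.mod_lt _ k.pos⟩‖ * σ j :=
            Finset.sum_congr rfl fun k _ => hentry k i j
        _ = σ i * (∑ k : Fin m, ‖R i ⟨(j.val + k.val) % m, Nat.mod_lt _ k.pos⟩‖) * σ j := by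
            simp only [Finset.mul_sum, Finset.sum_mul]
        _ = σ i * (∑ t, ‖R i t‖) * σ j := by rw [hcyc i j]
    rw [hEeq]
    calc (∑ i, σ i) ^ 2 = ∑ i, ∑ j, σ i * 1 * σ j := by
          rw [sq]
          rw [Finset.sum_mul_sum]
          simp [mul_one]
      _ ≤ ∑ i, ∑ j, σ i * (∑ t, ‖R i t‖) * σ j := by
          refine Finset.sum_le_sum fun i _ => Finset.sum_le_sum fun j _ => ?_
          have h2 : σ i * 1 ≤ σ i * ∑ t, ‖R i t‖ :=
            mul_le_mul_of_nonneg_left (hL i) (hσ i)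
          exact mul_le_mul_of_nonneg_right h2 (hσ j)
  -- combine
  calc (1 / (n : ℝ)) * (∑ i, σ i) ^ 2
      ≤ (1 / (n : ℝ)) * ∑ k : Fin m, ∑ i, ∑ j, ‖(D * cycSub R k * D) i j‖ := by
        apply mul_le_mul_of_nonneg_left hE
        positivity
    _ = ∑ k : Fin m, (1 / (n : ℝ)) * ∑ i, ∑ j, ‖(D * cycSub R k * D) i j‖ := by
        rw [Finset.mul_sum]
    _ ≤ ∑ k : Fin m, nuclearNorm (D * cycSub R k * D) :=
        Finset.sum_le_sum fun k _ => nuclear_ge_l1 _
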